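/- arXiv:1211.3868 — 2 statements merged into one kernel-verified Lean document; each statement's English description precedes it below -/
import Mathlib

section
/- With X^c defined as in the construction (piecewise running supremum minus c, alternating with running infimum plus c), for every s > 0 the jump of X^c at s is bounded by the jump of X at s: |X^c(s) − X^c(s−)| ≤ |X(s) − X(s−)|. -/
open Set Filter MeasureTheory
open scoped ENNReal NNReal Topology

noncomputable section

/-- A function is càdlàg: right-continuous with left limits. -/
def Cadlag (f : ℝ → ℝ) : Prop :=
  (∀ t : ℝ, Tendsto f (nhdsWithin t (Ici t)) (nhds (f t))) ∧
  (∀ t : ℝ, ∃ l : ℝ, Tendsto f (nhdsWithin t (Iio t)) (nhds l))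

/-- Jump of `f` at `s`. -/
def jumpAt (f : ℝ → ℝ) (s : ℝ) : ℝ := f s - Function.leftLim f s

def supOn (f : ℝ → ℝ) (a b : ℝ) : ℝ := sSup (f '' Icc a b)
def infOn (f : ℝ → ℝ) (a b : ℝ) : ℝ := sInf (f '' Icc a b)

def TuZero (X : ℝ → ℝ) (c : ℝ) : ℝ≥0∞ :=
  sInf {u | ∃ s : ℝ, 0 ≤ s ∧ u = ENNReal.ofReal s ∧ supOn X 0 s - X 0 > c}

def TdIni (X : ℝ → ℝ) (c : ℝ) : ℝ≥0∞ :=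
  sInf {u | ∃ s : ℝ, 0 ≤ s ∧ u = ENNReal.ofReal s ∧ X 0 - infOn X 0 s > c}

def nextTd (X : ℝ → ℝ) (c : ℝ) (a : ℝ≥0∞) : ℝ≥0∞ :=
  sInf {u | ∃ s : ℝ, 0 ≤ s ∧ a ≤ ENNReal.ofReal s ∧ u = ENNReal.ofReal s ∧
    supOn X a.toReal s - X s > 2 * c}

def nextTu (X : ℝ → ℝ) (c : ℝ) (a : ℝ≥0∞) : ℝ≥0∞ :=
  sInf {u | ∃ s : ℝ, 0 ≤ s ∧ a ≤ ENNReal.ofReal s ∧ u = ENNReal.ofReal s ∧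
    X s - infOn X a.toReal s > 2 * c}

def TuTd (X : ℝ → ℝ) (c : ℝ) : ℕ → ℝ≥0∞ × ℝ≥0∞
  | 0 => (TuZero X c, nextTd X c (TuZero X c))
  | (n + 1) =>
      let tu := nextTu X c (TuTd X c n).2
      (tu, nextTd X c tu)

def Tu (X : ℝ → ℝ) (c : ℝ) (n : ℕ) : ℝ≥0∞ := (TuTd X c n).1
def Td (X : ℝ → ℝ) (c : ℝ) (n : ℕ) : ℝ≥0∞ := (TuTd X c n).2

open Classical in
/-- The finite variation approximation `X^c` from the paper's construction. -/
def Xc (X : ℝ → ℝ) (c : ℝ) (s : ℝ) : ℝ :=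
  if ENNReal.ofReal s < Tu X c 0 then X 0
  else if h : ∃ k, Tu X c k ≤ ENNReal.ofReal s ∧ ENNReal.ofReal s < Td X c k then
    supOn X (Tu X c (Nat.find h)).toReal s - c
  else if h' : ∃ k, Td X c k ≤ ENNReal.ofReal s ∧ ENNReal.ofReal s < Tu X c (k + 1) then
    infOn X (Td X c (Nat.find h')).toReal s + c
  else 0

/-- Truncated variation at level `c` on `[0, T]`. -/
def TVtrunc (f : ℝ → ℝ) (c T : ℝ) : ℝ≥0∞ :=
  ⨆ (n : ℕ) (t : ℕ → ℝ) (_ : Monotone t) (_ : ∀ i, t i ∈ Icc (0 : ℝ) T),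
    ∑ i ∈ Finset.range n, ENNReal.ofReal (|f (t (i + 1)) - f (t i)| - c)

/-- Upward truncated variation at level `c` on `[0, T]`. -/
def UTVtrunc (f : ℝ → ℝ) (c T : ℝ) : ℝ≥0∞ :=
  ⨆ (n : ℕ) (t : ℕ → ℝ) (_ : Monotone t) (_ : ∀ i, t i ∈ Icc (0 : ℝ) T),
    ∑ i ∈ Finset.range n, ENNReal.ofReal (f (t (i + 1)) - f (t i) - c)

/-- Downward truncated variation at level `c` on `[0, T]`. -/
def DTVtrunc (f : ℝ → ℝ) (c T : ℝ) : ℝ≥0∞ :=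
  ⨆ (n : ℕ) (t : ℕ → ℝ) (_ : Monotone t) (_ : ∀ i, t i ∈ Icc (0 : ℝ) T),
    ∑ i ∈ Finset.range n, ENNReal.ofReal (f (t i) - f (t (i + 1)) - c)

/-- Left-endpoint Riemann–Stieltjes sum of `f` against `g` over the dyadic
partition of `[0, t]` with `2 ^ n` pieces. -/
def RSsum (f g : ℝ → ℝ) (t : ℝ) (n : ℕ) : ℝ :=
  ∑ i ∈ Finset.range (2 ^ n),
    f (t * i / 2 ^ n) * (g (t * (i + 1) / 2 ^ n) - g (t * i / 2 ^ n))

/-- Pathwise Lebesgue–Stieltjes integral `∫_0^t f_- dg`, realized as the limit of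
left-endpoint Riemann–Stieltjes sums along dyadic partitions. -/
def LSint (f g : ℝ → ℝ) (t : ℝ) : ℝ := limUnder atTop (fun n => RSsum f g t n)

/-- Discrete covariation sums along dyadic partitions. -/
def QVsum (f g : ℝ → ℝ) (t : ℝ) (n : ℕ) : ℝ :=
  ∑ i ∈ Finset.range (2 ^ n),
    (f (t * (i + 1) / 2 ^ n) - f (t * i / 2 ^ n)) *
      (g (t * (i + 1) / 2 ^ n) - g (t * i / 2 ^ n))

/-- Sum of products of jumps `∑_{0 < s ≤ t} Δf Δg`. -/
def jumpSum (f g : ℝ → ℝ) (t : ℝ) : ℝ :=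
  ∑' s : ℝ, Set.indicator (Ioc (0 : ℝ) t) (fun u => jumpAt f u * jumpAt g u) s

/-- A local martingale: there is a localizing sequence of stopping times. -/
def IsLocalMartingale {Ω : Type*} [m : MeasurableSpace Ω] (F : Filtration ℝ m)
    (P : Measure Ω) (M : ℝ → Ω → ℝ) : Prop :=
  ∃ τ : ℕ → Ω → ℝ, (∀ n, IsStoppingTime F (fun ω => (τ n ω : WithTop ℝ))) ∧
    (∀ ω, Tendsto (fun n => τ n ω) atTop atTop) ∧
    ∀ n, Martingale (stoppedProcess M (fun ω => (τ n ω : WithTop ℝ))) F P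

/-- A (càdlàg) semimartingale: adapted, càdlàg, and decomposable as a local
martingale plus an adapted càdlàg process of locally finite variation. -/
def IsSemimartingale {Ω : Type*} [m : MeasurableSpace Ω] (F : Filtration ℝ m)
    (P : Measure Ω) (X : ℝ → Ω → ℝ) : Prop :=
  Adapted F X ∧ (∀ ω, Cadlag fun t => X t ω) ∧
  ∃ M A : ℝ → Ω → ℝ, (∀ t ω, X t ω = M t ω + A t ω) ∧
    IsLocalMartingale F P M ∧ Adapted F A ∧ (∀ ω, Cadlag fun t => A t ω) ∧
    (∀ ω, ∀ T > (0 : ℝ), eVariationOn (fun t => A t ω) (Icc 0 T) < ⊤)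

/-- The filtration satisfies the usual hypotheses w.r.t. `P`:
right-continuity and completeness. -/
def UsualConditions {Ω : Type*} [m : MeasurableSpace Ω] (F : Filtration ℝ m)
    (P : Measure Ω) : Prop :=
  (∀ t : ℝ, F t = ⨅ (s : ℝ) (_ : t < s), F s) ∧
  (∀ t : ℝ, ∀ s : Set Ω, P s = 0 → MeasurableSet[F t] s)

/-- Uniform convergence on compacts in probability, as `c ↓ 0`. -/
def UCP {Ω : Type*} [m : MeasurableSpace Ω] (P : Measure Ω)
    (Fc : ℝ → ℝ → Ω → ℝ) (G : ℝ → Ω → ℝ) : Prop :=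
  ∀ T > (0 : ℝ), ∀ ε > (0 : ℝ),
    Tendsto (fun c => P {ω | ε ≤ ⨆ t : Icc (0 : ℝ) T, |Fc c t ω - G t ω|})
      (nhdsWithin 0 (Ioi 0)) (nhds 0)

/-- Standard Brownian motion started at `0`. -/
def IsStandardBM {Ω : Type*} [m : MeasurableSpace Ω] (P : Measure Ω)
    (B : ℝ → Ω → ℝ) : Prop :=
  (∀ ω, B 0 ω = 0) ∧ (∀ ω, Continuous fun t => B t ω) ∧
  (∀ t, Measurable (B t)) ∧
  (∀ s t : ℝ, 0 ≤ s → s ≤ t →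
    P.map (fun ω => B t ω - B s ω) = ProbabilityTheory.gaussianReal 0 ((t - s).toNNReal)) ∧
  (∀ n : ℕ, ∀ t : Fin (n + 1) → ℝ, Monotone t → (∀ i, 0 ≤ t i) →
    ProbabilityTheory.iIndepFun
      (fun (i : Fin n) ω => B (t i.succ) ω - B (t i.castSucc) ω) P)

/-- Natural σ-algebra of the process `B` up to time `t`. -/
def naturalSigma {Ω : Type*} (B : ℝ → Ω → ℝ) (t : ℝ) : MeasurableSpace Ω :=
  ⨆ s ∈ Iic t, MeasurableSpace.comap (B s) inferInstance


section Infra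

open Function

private lemma cadlag_abs_bdd {X : ℝ → ℝ} (hX : Cadlag X) (a b : ℝ) :
    ∃ M : ℝ, ∀ t ∈ Icc a b, |X t| ≤ M := by
  have key : ∀ t : ℝ, ∃ M : ℝ, ∀ᶠ u in 𝓝 t, |X u| ≤ M := by
    intro t
    obtain ⟨l, hl⟩ := hX.2 t
    have h1 : ∀ᶠ u in 𝓝[≥] t, |X u| ≤ |X t| + 1 := by
      filter_upwards [(hX.1 t).eventually (Metric.ball_mem_nhds (X t) one_pos)] with u hu
      have h : |X u - X t| < 1 := by simpa [Real.dist_eq] using hu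
      have := abs_sub_abs_le_abs_sub (X u) (X t)
      linarith
    have h2 : ∀ᶠ u in 𝓝[<] t, |X u| ≤ |l| + 1 := by
      filter_upwards [hl.eventually (Metric.ball_mem_nhds l one_pos)] with u hu
      have h : |X u - l| < 1 := by simpa [Real.dist_eq] using hu
      have := abs_sub_abs_le_abs_sub (X u) l
      linarith
    refine ⟨max (|X t| + 1) (|l| + 1), ?_⟩
    rw [← nhdsLT_sup_nhdsGE t, eventually_sup]
    exact ⟨h2.mono fun u hu => le_trans hu (le_max_right _ _),
      h1.mono fun u hu => le_trans hu (le_max_left _ _)⟩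
  choose M hM using key
  obtain ⟨F, hF⟩ := isCompact_Icc.elim_nhds_subcover
    (fun t => {u | |X u| ≤ M t}) (fun t _ => hM t)
  rcases F.eq_empty_or_nonempty with rfl | hFne
  · refine ⟨0, fun t ht => absurd (hF.2 ht) (by simp)⟩
  · refine ⟨F.sup' hFne M, fun t ht => ?_⟩
    have h := hF.2 ht
    simp only [Set.mem_iUnion, Set.mem_setOf_eq] at h
    obtain ⟨x, hx, hxt⟩ := h
    exact le_trans hxt (Finset.le_sup' M hx)

private lemma bddAbove_img {X : ℝ → ℝ} (hX : Cadlag X) (a b : ℝ) :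
    BddAbove (X '' Icc a b) := by
  obtain ⟨M, hM⟩ := cadlag_abs_bdd hX a b
  refine ⟨M, ?_⟩
  rintro y ⟨t, ht, rfl⟩
  exact (abs_le.1 (hM t ht)).2

private lemma bddBelow_img {X : ℝ → ℝ} (hX : Cadlag X) (a b : ℝ) :
    BddBelow (X '' Icc a b) := by
  obtain ⟨M, hM⟩ := cadlag_abs_bdd hX a b
  refine ⟨-M, ?_⟩
  rintro y ⟨t, ht, rfl⟩
  exact (abs_le.1 (hM t ht)).1

private lemma le_supOn {X : ℝ → ℝ} (hX : Cadlag X) {a b t : ℝ} (h : t ∈ Icc a b) :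
    X t ≤ supOn X a b :=
  le_csSup (bddAbove_img hX a b) (mem_image_of_mem X h)

private lemma infOn_le {X : ℝ → ℝ} (hX : Cadlag X) {a b t : ℝ} (h : t ∈ Icc a b) :
    infOn X a b ≤ X t :=
  csInf_le (bddBelow_img hX a b) (mem_image_of_mem X h)

private lemma supOn_le {X : ℝ → ℝ} {a b M : ℝ} (hab : a ≤ b) (h : ∀ t ∈ Icc a b, X t ≤ M) :
    supOn X a b ≤ M :=
  csSup_le ((nonempty_Icc.2 hab).image X) (by rintro y ⟨t, ht, rfl⟩; exact h t ht)

private lemma le_infOn {X : ℝ → ℝ} {a b M : ℝ} (hab : a ≤ b) (h : ∀ t ∈ Icc a b, M ≤ X t) :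
    M ≤ infOn X a b :=
  le_csInf ((nonempty_Icc.2 hab).image X) (by rintro y ⟨t, ht, rfl⟩; exact h t ht)

private lemma supOn_mono {X : ℝ → ℝ} (hX : Cadlag X) {a b b' : ℝ} (h1 : a ≤ b) (h2 : b ≤ b') :
    supOn X a b ≤ supOn X a b' :=
  csSup_le_csSup (bddAbove_img hX a b') ((nonempty_Icc.2 h1).image X)
    (image_mono (f := X) (Icc_subset_Icc_right h2))

private lemma infOn_mono {X : ℝ → ℝ} (hX : Cadlag X) {a b b' : ℝ} (h1 : a ≤ b) (h2 : b ≤ b') :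
    infOn X a b' ≤ infOn X a b :=
  csInf_le_csInf (bddBelow_img hX a b') ((nonempty_Icc.2 h1).image X)
    (image_mono (f := X) (Icc_subset_Icc_right h2))

private lemma supOn_split {X : ℝ → ℝ} (hX : Cadlag X) {a s : ℝ} (h : a < s) :
    supOn X a s = max (sSup (X '' Ico a s)) (X s) := by
  have he : Icc a s = Ico a s ∪ {s} := (Ico_union_right h.le).symm
  rw [supOn, he, image_union, image_singleton,
    csSup_union ((bddAbove_img hX a s).mono (image_mono (f := X) Ico_subset_Icc_self))
      ((nonempty_Ico.2 h).image X) bddAbove_singleton (singleton_nonempty _),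
    csSup_singleton]

private lemma infOn_split {X : ℝ → ℝ} (hX : Cadlag X) {a s : ℝ} (h : a < s) :
    infOn X a s = min (sInf (X '' Ico a s)) (X s) := by
  have he : Icc a s = Ico a s ∪ {s} := (Ico_union_right h.le).symm
  rw [infOn, he, image_union, image_singleton,
    csInf_union ((bddBelow_img hX a s).mono (image_mono (f := X) Ico_subset_Icc_self))
      ((nonempty_Ico.2 h).image X) bddBelow_singleton (singleton_nonempty _),
    csInf_singleton]

private lemma le_sSup_Ico {X : ℝ → ℝ} (hX : Cadlag X) {a s t : ℝ} (h : t ∈ Ico a s) :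
    X t ≤ sSup (X '' Ico a s) :=
  le_csSup ((bddAbove_img hX a s).mono (image_mono (f := X) Ico_subset_Icc_self))
    (mem_image_of_mem X h)

private lemma sInf_Ico_le {X : ℝ → ℝ} (hX : Cadlag X) {a s t : ℝ} (h : t ∈ Ico a s) :
    sInf (X '' Ico a s) ≤ X t :=
  csInf_le ((bddBelow_img hX a s).mono (image_mono (f := X) Ico_subset_Icc_self))
    (mem_image_of_mem X h)

private lemma tendsto_supOn_left {X : ℝ → ℝ} (hX : Cadlag X) {a s : ℝ} (h : a < s) :
    Tendsto (fun t => supOn X a t) (𝓝[<] s) (𝓝 (sSup (X '' Ico a s))) := by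
  rw [tendsto_order]
  constructor
  · intro b hb
    obtain ⟨y, ⟨v, hv, rfl⟩, hy⟩ := exists_lt_of_lt_csSup ((nonempty_Ico.2 h).image X) hb
    filter_upwards [Ioo_mem_nhdsLT hv.2] with u hu
    exact lt_of_lt_of_le hy (le_supOn hX ⟨hv.1, hu.1.le⟩)
  · intro b hb
    filter_upwards [Ioo_mem_nhdsLT h] with u hu
    refine lt_of_le_of_lt ?_ hb
    exact csSup_le_csSup ((bddAbove_img hX a s).mono (image_mono (f := X) Ico_subset_Icc_self))
      ((nonempty_Icc.2 hu.1.le).image X)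
      (image_mono (f := X) fun x hx => ⟨hx.1, lt_of_le_of_lt hx.2 hu.2⟩)

private lemma tendsto_infOn_left {X : ℝ → ℝ} (hX : Cadlag X) {a s : ℝ} (h : a < s) :
    Tendsto (fun t => infOn X a t) (𝓝[<] s) (𝓝 (sInf (X '' Ico a s))) := by
  rw [tendsto_order]
  constructor
  · intro b hb
    filter_upwards [Ioo_mem_nhdsLT h] with u hu
    refine lt_of_lt_of_le hb ?_
    exact csInf_le_csInf ((bddBelow_img hX a s).mono (image_mono (f := X) Ico_subset_Icc_self))
      ((nonempty_Icc.2 hu.1.le).image X)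
      (image_mono (f := X) fun x hx => ⟨hx.1, lt_of_le_of_lt hx.2 hu.2⟩)
  · intro b hb
    obtain ⟨y, ⟨v, hv, rfl⟩, hy⟩ := exists_lt_of_csInf_lt ((nonempty_Ico.2 h).image X) hb
    filter_upwards [Ioo_mem_nhdsLT hv.2] with u hu
    exact lt_of_le_of_lt (infOn_le hX ⟨hv.1, hu.1.le⟩) hy

private lemma right_ctrl {X : ℝ → ℝ} (hX : Cadlag X) (t : ℝ) {ε : ℝ} (hε : 0 < ε) :
    ∃ δ > 0, ∀ v ∈ Icc t (t + δ), |X v - X t| < ε := by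
  have h : {u | dist (X u) (X t) < ε} ∈ 𝓝[≥] t :=
    (hX.1 t) (Metric.ball_mem_nhds (X t) hε)
  rw [Metric.mem_nhdsWithin_iff] at h
  obtain ⟨δ, hδ, hsub⟩ := h
  refine ⟨δ/2, by positivity, fun v hv => ?_⟩
  have hmem : v ∈ Metric.ball t δ ∩ Ici t := by
    constructor
    · rw [Metric.mem_ball, Real.dist_eq, abs_lt]
      constructor <;> [linarith [hv.1]; linarith [hv.2]]
    · exact hv.1
  have := hsub hmem
  simpa [Real.dist_eq] using this

end Infra
section Times

private lemma le_nextTd (X : ℝ → ℝ) (c : ℝ) (a : ℝ≥0∞) : a ≤ nextTd X c a :=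
  le_sInf (by rintro u ⟨s, hs0, has, rfl, _⟩; exact has)

private lemma le_nextTu (X : ℝ → ℝ) (c : ℝ) (a : ℝ≥0∞) : a ≤ nextTu X c a :=
  le_sInf (by rintro u ⟨s, hs0, has, rfl, _⟩; exact has)

private lemma Td_eq (X : ℝ → ℝ) (c : ℝ) (k : ℕ) : Td X c k = nextTd X c (Tu X c k) := by
  cases k <;> rfl

private lemma Tu_zero_eq (X : ℝ → ℝ) (c : ℝ) : Tu X c 0 = TuZero X c := rfl

private lemma Tu_succ_eq (X : ℝ → ℝ) (c : ℝ) (k : ℕ) :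
    Tu X c (k + 1) = nextTu X c (Td X c k) := rfl

private lemma Tu_le_Td (X : ℝ → ℝ) (c : ℝ) (k : ℕ) : Tu X c k ≤ Td X c k :=
  (Td_eq X c k) ▸ le_nextTd X c _

private lemma Td_le_Tu_succ (X : ℝ → ℝ) (c : ℝ) (k : ℕ) : Td X c k ≤ Tu X c (k + 1) :=
  (Tu_succ_eq X c k) ▸ le_nextTu X c _

private lemma Tu_mono (X : ℝ → ℝ) (c : ℝ) : Monotone (Tu X c) :=
  monotone_nat_of_le_succ fun k => (Tu_le_Td X c k).trans (Td_le_Tu_succ X c k)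

private lemma Td_mono (X : ℝ → ℝ) (c : ℝ) : Monotone (Td X c) :=
  monotone_nat_of_le_succ fun k => (Td_le_Tu_succ X c k).trans (Tu_le_Td X c (k + 1))

private lemma nextTd_lt {X : ℝ → ℝ} (hX : Cadlag X) {c : ℝ} (hc : 0 < c) {a : ℝ≥0∞}
    (ha : a ≠ ⊤) : a < nextTd X c a := by
  obtain ⟨δ, hδ, hctrl⟩ := right_ctrl hX a.toReal hc
  have ht0 : (0:ℝ) ≤ a.toReal := ENNReal.toReal_nonneg
  have key : ∀ u ∈ {u : ℝ≥0∞ | ∃ s : ℝ, 0 ≤ s ∧ a ≤ ENNReal.ofReal s ∧ u = ENNReal.ofReal s ∧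
      supOn X a.toReal s - X s > 2 * c}, ENNReal.ofReal (a.toReal + δ) ≤ u := by
    rintro u ⟨s, hs0, has, rfl, hsup⟩
    by_contra hle
    push_neg at hle
    have hs_le : s ≤ a.toReal + δ :=
      le_of_lt ((ENNReal.ofReal_lt_ofReal_iff (by linarith)).1 hle)
    have hts : a.toReal ≤ s := (ENNReal.le_ofReal_iff_toReal_le ha hs0).1 has
    have hsup_le : supOn X a.toReal s ≤ X a.toReal + c :=
      supOn_le hts fun v hv => by
        have := (abs_lt.1 (hctrl v ⟨hv.1, hv.2.trans hs_le⟩)).2; linarith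
    have hXs : X a.toReal - c < X s := by
      have := (abs_lt.1 (hctrl s ⟨hts, hs_le⟩)).1; linarith
    linarith
  calc a = ENNReal.ofReal a.toReal := (ENNReal.ofReal_toReal ha).symm
    _ < ENNReal.ofReal (a.toReal + δ) := by
        rw [ENNReal.ofReal_lt_ofReal_iff (by linarith)]; linarith
    _ ≤ nextTd X c a := le_sInf key

private lemma nextTu_lt {X : ℝ → ℝ} (hX : Cadlag X) {c : ℝ} (hc : 0 < c) {a : ℝ≥0∞}
    (ha : a ≠ ⊤) : a < nextTu X c a := by
  obtain ⟨δ, hδ, hctrl⟩ := right_ctrl hX a.toReal hc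
  have ht0 : (0:ℝ) ≤ a.toReal := ENNReal.toReal_nonneg
  have key : ∀ u ∈ {u : ℝ≥0∞ | ∃ s : ℝ, 0 ≤ s ∧ a ≤ ENNReal.ofReal s ∧ u = ENNReal.ofReal s ∧
      X s - infOn X a.toReal s > 2 * c}, ENNReal.ofReal (a.toReal + δ) ≤ u := by
    rintro u ⟨s, hs0, has, rfl, hsup⟩
    by_contra hle
    push_neg at hle
    have hs_le : s ≤ a.toReal + δ :=
      le_of_lt ((ENNReal.ofReal_lt_ofReal_iff (by linarith)).1 hle)
    have hts : a.toReal ≤ s := (ENNReal.le_ofReal_iff_toReal_le ha hs0).1 has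
    have hinf_ge : X a.toReal - c ≤ infOn X a.toReal s :=
      le_infOn hts fun v hv => by
        have := (abs_lt.1 (hctrl v ⟨hv.1, hv.2.trans hs_le⟩)).1; linarith
    have hXs : X s < X a.toReal + c := by
      have := (abs_lt.1 (hctrl s ⟨hts, hs_le⟩)).2; linarith
    linarith
  calc a = ENNReal.ofReal a.toReal := (ENNReal.ofReal_toReal ha).symm
    _ < ENNReal.ofReal (a.toReal + δ) := by
        rw [ENNReal.ofReal_lt_ofReal_iff (by linarith)]; linarith
    _ ≤ nextTu X c a := le_sInf key

private lemma nextTd_pre (X : ℝ → ℝ) (c : ℝ) {a : ℝ≥0∞} {u : ℝ} (h0 : 0 ≤ u)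
    (ha : a ≤ ENNReal.ofReal u) (hu : ENNReal.ofReal u < nextTd X c a) :
    supOn X a.toReal u - X u ≤ 2 * c := by
  by_contra h
  push_neg at h
  exact hu.not_ge (sInf_le ⟨u, h0, ha, rfl, h⟩)

private lemma nextTu_pre (X : ℝ → ℝ) (c : ℝ) {a : ℝ≥0∞} {u : ℝ} (h0 : 0 ≤ u)
    (ha : a ≤ ENNReal.ofReal u) (hu : ENNReal.ofReal u < nextTu X c a) :
    X u - infOn X a.toReal u ≤ 2 * c := by
  by_contra h
  push_neg at h
  exact hu.not_ge (sInf_le ⟨u, h0, ha, rfl, h⟩)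

private lemma tuZero_pre (X : ℝ → ℝ) (c : ℝ) {u : ℝ} (h0 : 0 ≤ u)
    (hu : ENNReal.ofReal u < TuZero X c) : supOn X 0 u - X 0 ≤ c := by
  by_contra h
  push_neg at h
  exact hu.not_ge (sInf_le ⟨u, h0, rfl, h⟩)

end Times
section Hit

private lemma nextTd_hit {X : ℝ → ℝ} (hX : Cadlag X) {c : ℝ} (hc : 0 < c) {a : ℝ≥0∞}
    (ha : a ≠ ⊤) (hT : nextTd X c a ≠ ⊤) :
    sSup (X '' Ico a.toReal (nextTd X c a).toReal) - X (nextTd X c a).toReal ≥ 2 * c := by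
  set T := nextTd X c a with hTdef
  set t := T.toReal with htdef
  set p := a.toReal with hpdef
  have hlt : a < T := nextTd_lt hX hc ha
  have hpt : p < t := by rwa [← ENNReal.toReal_lt_toReal ha hT] at hlt
  have hp0 : (0:ℝ) ≤ p := ENNReal.toReal_nonneg
  have ht0 : (0:ℝ) ≤ t := le_trans hp0 hpt.le
  have step1 : sSup (X '' Icc p t) - X t ≥ 2 * c := by
    by_contra hcon
    push_neg at hcon
    set ε := 2 * c - (sSup (X '' Icc p t) - X t) with hεdef
    have hε : 0 < ε := by simp only [hεdef]; linarith
    obtain ⟨δ, hδ, hctrl⟩ := right_ctrl hX t (half_pos hε)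
    have hTlt : T < T + ENNReal.ofReal δ :=
      ENNReal.lt_add_right hT (ENNReal.ofReal_pos.2 hδ).ne'
    have hlt2 : sInf {u : ℝ≥0∞ | ∃ s : ℝ, 0 ≤ s ∧ a ≤ ENNReal.ofReal s ∧
        u = ENNReal.ofReal s ∧ supOn X a.toReal s - X s > 2 * c} < T + ENNReal.ofReal δ := hTlt
    obtain ⟨q, hqmem, hqlt⟩ := sInf_lt_iff.1 hlt2
    obtain ⟨s, hs0, has, rfl, hsup⟩ := hqmem
    have hts : t ≤ s := by
      have : T ≤ ENNReal.ofReal s := sInf_le ⟨s, hs0, has, rfl, hsup⟩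
      exact (ENNReal.le_ofReal_iff_toReal_le hT hs0).1 this
    have hstδ : s < t + δ := by
      have h1 : T + ENNReal.ofReal δ = ENNReal.ofReal (t + δ) := by
        rw [ENNReal.ofReal_add ht0 hδ.le, ENNReal.ofReal_toReal hT]
      rw [h1] at hqlt
      exact (ENNReal.ofReal_lt_ofReal_iff (by linarith)).1 hqlt
    have hsplit : Icc p s = Icc p t ∪ Icc t s := (Icc_union_Icc_eq_Icc hpt.le hts).symm
    have hsup_s : supOn X p s ≤ max (sSup (X '' Icc p t)) (X t + ε / 2) := by
      rw [supOn, hsplit, image_union,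
        csSup_union (bddAbove_img hX p t) ((nonempty_Icc.2 hpt.le).image X)
          (bddAbove_img hX t s) ((nonempty_Icc.2 hts).image X)]
      refine max_le_max le_rfl ?_
      exact csSup_le ((nonempty_Icc.2 hts).image X) (by
        rintro y ⟨v, hv, rfl⟩
        have := (abs_lt.1 (hctrl v ⟨hv.1, hv.2.trans hstδ.le⟩)).2; linarith)
    have hXs : X t - ε / 2 < X s := by
      have := (abs_lt.1 (hctrl s ⟨hts, hstδ.le⟩)).1; linarith
    have hXtS : X t ≤ sSup (X '' Icc p t) :=
      le_csSup (bddAbove_img hX p t) (mem_image_of_mem X ⟨hpt.le, le_rfl⟩)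
    have hmax : max (sSup (X '' Icc p t)) (X t + ε / 2) ≤ sSup (X '' Icc p t) + ε / 2 :=
      max_le (by linarith) (by linarith)
    have : supOn X p s - X s < sSup (X '' Icc p t) + ε / 2 - (X t - ε / 2) := by
      have := le_trans hsup_s hmax; linarith
    simp only [hεdef] at this
    have hps : supOn X a.toReal s - X s > 2 * c := hsup
    rw [← hpdef] at hps
    linarith
  have hsplit2 : sSup (X '' Icc p t) = max (sSup (X '' Ico p t)) (X t) := supOn_split hX hpt
  by_contra hfin
  push_neg at hfin
  have h1 : max (sSup (X '' Ico p t)) (X t) < X t + 2 * c :=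
    max_lt (by linarith) (by linarith)
  rw [← hsplit2] at h1
  linarith

private lemma nextTu_hit {X : ℝ → ℝ} (hX : Cadlag X) {c : ℝ} (hc : 0 < c) {a : ℝ≥0∞}
    (ha : a ≠ ⊤) (hT : nextTu X c a ≠ ⊤) :
    X (nextTu X c a).toReal - sInf (X '' Ico a.toReal (nextTu X c a).toReal) ≥ 2 * c := by
  set T := nextTu X c a with hTdef
  set t := T.toReal with htdef
  set p := a.toReal with hpdef
  have hlt : a < T := nextTu_lt hX hc ha
  have hpt : p < t := by rwa [← ENNReal.toReal_lt_toReal ha hT] at hlt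
  have hp0 : (0:ℝ) ≤ p := ENNReal.toReal_nonneg
  have ht0 : (0:ℝ) ≤ t := le_trans hp0 hpt.le
  have step1 : X t - sInf (X '' Icc p t) ≥ 2 * c := by
    by_contra hcon
    push_neg at hcon
    set ε := 2 * c - (X t - sInf (X '' Icc p t)) with hεdef
    have hε : 0 < ε := by simp only [hεdef]; linarith
    obtain ⟨δ, hδ, hctrl⟩ := right_ctrl hX t (half_pos hε)
    have hTlt : T < T + ENNReal.ofReal δ :=
      ENNReal.lt_add_right hT (ENNReal.ofReal_pos.2 hδ).ne'
    have hlt2 : sInf {u : ℝ≥0∞ | ∃ s : ℝ, 0 ≤ s ∧ a ≤ ENNReal.ofReal s ∧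
        u = ENNReal.ofReal s ∧ X s - infOn X a.toReal s > 2 * c} < T + ENNReal.ofReal δ := hTlt
    obtain ⟨q, hqmem, hqlt⟩ := sInf_lt_iff.1 hlt2
    obtain ⟨s, hs0, has, rfl, hsup⟩ := hqmem
    have hts : t ≤ s := by
      have : T ≤ ENNReal.ofReal s := sInf_le ⟨s, hs0, has, rfl, hsup⟩
      exact (ENNReal.le_ofReal_iff_toReal_le hT hs0).1 this
    have hstδ : s < t + δ := by
      have h1 : T + ENNReal.ofReal δ = ENNReal.ofReal (t + δ) := by
        rw [ENNReal.ofReal_add ht0 hδ.le, ENNReal.ofReal_toReal hT]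
      rw [h1] at hqlt
      exact (ENNReal.ofReal_lt_ofReal_iff (by linarith)).1 hqlt
    have hsplit : Icc p s = Icc p t ∪ Icc t s := (Icc_union_Icc_eq_Icc hpt.le hts).symm
    have hinf_s : min (sInf (X '' Icc p t)) (X t - ε / 2) ≤ infOn X p s := by
      rw [infOn, hsplit, image_union,
        csInf_union (bddBelow_img hX p t) ((nonempty_Icc.2 hpt.le).image X)
          (bddBelow_img hX t s) ((nonempty_Icc.2 hts).image X)]
      refine min_le_min le_rfl ?_
      exact le_csInf ((nonempty_Icc.2 hts).image X) (by
        rintro y ⟨v, hv, rfl⟩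
        have := (abs_lt.1 (hctrl v ⟨hv.1, hv.2.trans hstδ.le⟩)).1; linarith)
    have hXs : X s < X t + ε / 2 := by
      have := (abs_lt.1 (hctrl s ⟨hts, hstδ.le⟩)).2; linarith
    have hXtS : sInf (X '' Icc p t) ≤ X t :=
      csInf_le (bddBelow_img hX p t) (mem_image_of_mem X ⟨hpt.le, le_rfl⟩)
    have hmin : sInf (X '' Icc p t) - ε / 2 ≤ min (sInf (X '' Icc p t)) (X t - ε / 2) :=
      le_min (by linarith) (by linarith)
    have : X s - infOn X p s < X t + ε / 2 - (sInf (X '' Icc p t) - ε / 2) := by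
      have := le_trans hmin hinf_s; linarith
    simp only [hεdef] at this
    have hps : X s - infOn X a.toReal s > 2 * c := hsup
    rw [← hpdef] at hps
    linarith
  have hsplit2 : sInf (X '' Icc p t) = min (sInf (X '' Ico p t)) (X t) := infOn_split hX hpt
  by_contra hfin
  push_neg at hfin
  have h1 : X t - 2 * c < min (sInf (X '' Ico p t)) (X t) :=
    lt_min (by linarith) (by linarith)
  rw [← hsplit2] at h1
  linarith

private lemma tuZero_hit {X : ℝ → ℝ} (hX : Cadlag X) {c : ℝ} (hc : 0 < c)
    (hT : TuZero X c ≠ ⊤) (hpos : 0 < (TuZero X c).toReal) :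
    X (TuZero X c).toReal ≥ X 0 + c := by
  set t := (TuZero X c).toReal with htdef
  have hTt : TuZero X c = ENNReal.ofReal t := (ENNReal.ofReal_toReal hT).symm
  by_cases hmem : TuZero X c ∈ {u : ℝ≥0∞ | ∃ s : ℝ, 0 ≤ s ∧ u = ENNReal.ofReal s ∧
      supOn X 0 s - X 0 > c}
  · obtain ⟨s, hs0, hTs, hsup⟩ := hmem
    have hst : s = t := by rw [htdef, hTs, ENNReal.toReal_ofReal hs0]
    rw [hst] at hsup
    have hS : sSup (X '' Ico 0 t) ≤ X 0 + c := by
      refine csSup_le ((nonempty_Ico.2 hpos).image X) ?_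
      rintro y ⟨v, hv, rfl⟩
      have h1 : X v ≤ supOn X 0 v := le_supOn hX ⟨hv.1, le_rfl⟩
      have h2 : supOn X 0 v - X 0 ≤ c := tuZero_pre X c hv.1 (by
        rw [hTt]; exact (ENNReal.ofReal_lt_ofReal_iff hpos).2 hv.2)
      linarith
    have hsplit : supOn X 0 t = max (sSup (X '' Ico 0 t)) (X t) := supOn_split hX hpos
    rw [hsplit] at hsup
    by_contra hfin
    push_neg at hfin
    have : max (sSup (X '' Ico 0 t)) (X t) ≤ X 0 + c := max_le hS (by linarith)
    linarith
  · have hsup_t : supOn X 0 t - X 0 ≤ c := by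
      by_contra h
      push_neg at h
      exact hmem ⟨t, hpos.le, hTt, h⟩
    have key : ∀ ε : ℝ, 0 < ε → X 0 + c < X t + ε := by
      intro ε hε
      obtain ⟨δ, hδ, hctrl⟩ := right_ctrl hX t hε
      have hts' : t < t + δ := by linarith
      have hs'0 : 0 < t + δ := lt_trans hpos hts'
      have hlt2 : TuZero X c < ENNReal.ofReal (t + δ) := by
        rw [hTt]
        exact (ENNReal.ofReal_lt_ofReal_iff hs'0).2 hts'
      obtain ⟨q, hqmem, hqlt⟩ := sInf_lt_iff.1 hlt2
      obtain ⟨sq, hsq0, rfl, hsupq⟩ := hqmem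
      have hsqs' : sq ≤ t + δ := le_of_lt ((ENNReal.ofReal_lt_ofReal_iff hs'0).1 hqlt)
      have hbig : X 0 + c < supOn X 0 (t + δ) := by
        have := supOn_mono hX hsq0 hsqs'
        linarith
      have hsplit : Icc 0 (t + δ) = Icc 0 t ∪ Icc t (t + δ) :=
        (Icc_union_Icc_eq_Icc hpos.le hts'.le).symm
      have hbound : supOn X 0 (t + δ) ≤ max (supOn X 0 t) (X t + ε) := by
        rw [supOn, hsplit, image_union,
          csSup_union (bddAbove_img hX 0 t) ((nonempty_Icc.2 hpos.le).image X)
            (bddAbove_img hX t (t + δ)) ((nonempty_Icc.2 hts'.le).image X)]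
        refine max_le_max le_rfl ?_
        exact csSup_le ((nonempty_Icc.2 hts'.le).image X) (by
          rintro y ⟨v, hv, rfl⟩
          have := (abs_lt.1 (hctrl v ⟨hv.1, hv.2⟩)).2; linarith)
      have hle := le_trans hbig.le hbound
      rcases max_cases (supOn X 0 t) (X t + ε) with ⟨heq, _⟩ | ⟨heq, _⟩ <;> rw [heq] at hle
      · linarith
      · linarith
    by_contra hfin
    push_neg at hfin
    have := key ((X 0 + c - X t) / 2) (by linarith)
    linarith

end Hit
section Eval

private lemma Xc_init {X : ℝ → ℝ} {c : ℝ} {t : ℝ} (h : ENNReal.ofReal t < Tu X c 0) :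
    Xc X c t = X 0 := by
  rw [Xc, if_pos h]

private lemma Xc_up {X : ℝ → ℝ} {c : ℝ} {k : ℕ} {t : ℝ}
    (h1 : Tu X c k ≤ ENNReal.ofReal t) (h2 : ENNReal.ofReal t < Td X c k) :
    Xc X c t = supOn X (Tu X c k).toReal t - c := by
  have hex : ∃ j, Tu X c j ≤ ENNReal.ofReal t ∧ ENNReal.ofReal t < Td X c j := ⟨k, h1, h2⟩
  have hfind : Nat.find hex = k := by
    refine le_antisymm (Nat.find_le ⟨h1, h2⟩) ?_
    by_contra hlt
    push_neg at hlt
    obtain ⟨hj1, hj2⟩ := Nat.find_spec hex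
    have : Td X c (Nat.find hex) ≤ ENNReal.ofReal t :=
      le_trans (le_trans (Td_le_Tu_succ X c _) (Tu_mono X c (Nat.succ_le_of_lt hlt))) h1
    exact absurd this hj2.not_ge
  rw [Xc, if_neg (not_lt.2 ((Tu_mono X c (Nat.zero_le k)).trans h1)), dif_pos hex, hfind]

private lemma Xc_down {X : ℝ → ℝ} {c : ℝ} {k : ℕ} {t : ℝ}
    (h1 : Td X c k ≤ ENNReal.ofReal t) (h2 : ENNReal.ofReal t < Tu X c (k + 1)) :
    Xc X c t = infOn X (Td X c k).toReal t + c := by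
  have hnup : ¬∃ j, Tu X c j ≤ ENNReal.ofReal t ∧ ENNReal.ofReal t < Td X c j := by
    rintro ⟨j, hj1, hj2⟩
    rcases le_or_gt j k with hjk | hkj
    · exact absurd ((Td_mono X c hjk).trans h1) hj2.not_ge
    · exact absurd ((Tu_mono X c (Nat.succ_le_of_lt hkj)).trans hj1) h2.not_ge
  have hex : ∃ j, Td X c j ≤ ENNReal.ofReal t ∧ ENNReal.ofReal t < Tu X c (j + 1) := ⟨k, h1, h2⟩
  have hfind : Nat.find hex = k := by
    refine le_antisymm (Nat.find_le ⟨h1, h2⟩) ?_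
    by_contra hlt
    push_neg at hlt
    obtain ⟨hj1, hj2⟩ := Nat.find_spec hex
    have : Tu X c (Nat.find hex + 1) ≤ ENNReal.ofReal t :=
      le_trans (le_trans (Tu_mono X c (Nat.succ_le_of_lt hlt)) (Tu_le_Td X c k)) h1
    exact absurd this hj2.not_ge
  have hni : ¬ ENNReal.ofReal t < Tu X c 0 :=
    not_lt.2 (le_trans (le_trans (Tu_mono X c (Nat.zero_le k)) (Tu_le_Td X c k)) h1)
  rw [Xc, if_neg hni, dif_neg hnup, dif_pos hex, hfind]

private lemma leftLim_eq_of_eventually {f g : ℝ → ℝ} {s L : ℝ}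
    (hfg : ∀ᶠ t in 𝓝[<] s, f t = g t) (hg : Tendsto g (𝓝[<] s) (𝓝 L)) :
    Function.leftLim f s = L :=
  leftLim_eq_of_tendsto
    (hg.congr' (hfg.mono fun _ ht => ht.symm))

private lemma leftLim_X {X : ℝ → ℝ} (hX : Cadlag X) (s : ℝ) :
    Tendsto X (𝓝[<] s) (𝓝 (Function.leftLim X s)) := by
  obtain ⟨l, hl⟩ := hX.2 s
  rwa [leftLim_eq_of_tendsto (f := X) hl]

end Eval
section NoAccum

private lemma exists_Td_gt {X : ℝ → ℝ} (hX : Cadlag X) {c : ℝ} (hc : 0 < c) (b : ℝ) :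
    ∃ k, ENNReal.ofReal b < Td X c k := by
  by_contra hcon
  push_neg at hcon
  have hTdne : ∀ k, Td X c k ≠ ⊤ := fun k =>
    ne_top_of_le_ne_top ENNReal.ofReal_ne_top (hcon k)
  have hTune : ∀ k, Tu X c k ≠ ⊤ := fun k => ne_top_of_le_ne_top (hTdne k) (Tu_le_Td X c k)
  set d : ℕ → ℝ := fun k => (Td X c k).toReal with hddef
  set a : ℕ → ℝ := fun k => (Tu X c k).toReal with hadef
  have had : ∀ k, a k < d k := fun k => by
    have h := nextTd_lt hX hc (hTune k)
    rw [← Td_eq] at h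
    exact (ENNReal.toReal_lt_toReal (hTune k) (hTdne k)).2 h
  have hda : ∀ k, d k < a (k + 1) := fun k => by
    have h := nextTu_lt hX hc (hTdne k)
    rw [← Tu_succ_eq] at h
    exact (ENNReal.toReal_lt_toReal (hTdne k) (hTune (k + 1))).2 h
  have hdmono : StrictMono d := strictMono_nat_of_lt_succ fun k => (hda k).trans (had (k + 1))
  have hdbdd : BddAbove (range d) := by
    refine ⟨(ENNReal.ofReal b).toReal, ?_⟩
    rintro y ⟨k, rfl⟩
    exact ENNReal.toReal_mono ENNReal.ofReal_ne_top (hcon k)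
  set L := ⨆ k, d k with hLdef
  have htend : Tendsto d atTop (𝓝 L) := tendsto_atTop_ciSup hdmono.monotone hdbdd
  have hdlt : ∀ k, d k < L := fun k =>
    lt_of_lt_of_le (hdmono (Nat.lt_succ_self k)) (le_ciSup hdbdd (k + 1))
  obtain ⟨l, hl⟩ := hX.2 L
  have hmem : {u : ℝ | dist (X u) l < c / 2} ∈ 𝓝[<] L :=
    hl (Metric.ball_mem_nhds l (half_pos hc))
  rw [Metric.mem_nhdsWithin_iff] at hmem
  obtain ⟨δ, hδ, hsub⟩ := hmem
  obtain ⟨k, hk⟩ : ∃ k, L - δ < d k :=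
    ((htend.eventually (eventually_gt_nhds (by linarith))).exists)
  have hhit := nextTd_hit hX hc (hTune (k + 1)) (by rw [← Td_eq]; exact hTdne (k + 1))
  rw [← Td_eq] at hhit
  have hne : (X '' Ico (a (k + 1)) (d (k + 1))).Nonempty := (nonempty_Ico.2 (had (k + 1))).image X
  obtain ⟨y, ⟨v, hv, rfl⟩, hy⟩ := exists_lt_of_lt_csSup hne
    (sub_lt_self _ hc : sSup (X '' Ico (a (k + 1)) (d (k + 1))) - c
      < sSup (X '' Ico (a (k + 1)) (d (k + 1))))
  have hvIoo : v ∈ Metric.ball L δ ∩ Iio L := by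
    constructor
    · rw [Metric.mem_ball, Real.dist_eq, abs_lt]
      constructor
      · have : L - δ < a (k + 1) := lt_trans hk (hda k)
        linarith [hv.1]
      · have : v < L := lt_trans hv.2 (hdlt (k + 1))
        linarith
    · exact lt_trans hv.2 (hdlt (k + 1))
  have hdIoo : d (k + 1) ∈ Metric.ball L δ ∩ Iio L := by
    constructor
    · rw [Metric.mem_ball, Real.dist_eq, abs_lt]
      constructor
      · have : L - δ < d (k + 1) := lt_trans hk (hdmono (Nat.lt_succ_self k))
        linarith
      · linarith [hdlt (k + 1)]
    · exact hdlt (k + 1)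
  have hv2 := hsub hvIoo
  have hd2 := hsub hdIoo
  rw [Set.mem_setOf_eq, Real.dist_eq] at hv2 hd2
  have habs1 := abs_lt.1 hv2
  have habs2 := abs_lt.1 hd2
  have : X v - X (d (k + 1)) > c := by linarith
  linarith [habs1.1, habs1.2, habs2.1, habs2.2]

end NoAccum

section Cases

private lemma case_init {X : ℝ → ℝ} {c : ℝ} {s : ℝ} (hs : 0 < s)
    (h : ENNReal.ofReal s < Tu X c 0) : |jumpAt (Xc X c) s| ≤ |jumpAt X s| := by
  have hXcs : Xc X c s = X 0 := Xc_init h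
  have hev : ∀ᶠ t in 𝓝[<] s, Xc X c t = X 0 := by
    filter_upwards [self_mem_nhdsWithin] with t ht
    exact Xc_init (lt_of_le_of_lt (ENNReal.ofReal_le_ofReal (le_of_lt ht)) h)
  have hll : Function.leftLim (Xc X c) s = X 0 :=
    leftLim_eq_of_eventually hev tendsto_const_nhds
  rw [jumpAt, hXcs, hll, sub_self, abs_zero]
  exact abs_nonneg _

private lemma case_up0 {X : ℝ → ℝ} (hX : Cadlag X) {c : ℝ} (hc : 0 < c) {s : ℝ} (hs : 0 < s)
    (h : ENNReal.ofReal s = Tu X c 0) : |jumpAt (Xc X c) s| ≤ |jumpAt X s| := by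
  have hTne : Tu X c 0 ≠ ⊤ := h ▸ ENNReal.ofReal_ne_top
  have htr : (Tu X c 0).toReal = s := by rw [← h, ENNReal.toReal_ofReal hs.le]
  have hTd : Tu X c 0 < Td X c 0 := by
    rw [Td_eq]; exact nextTd_lt hX hc hTne
  have hXcs : Xc X c s = X s - c := by
    rw [Xc_up (k := 0) h.ge (h ▸ hTd), htr]
    congr 1
    rw [supOn, Icc_self, image_singleton, csSup_singleton]
  have hev : ∀ᶠ t in 𝓝[<] s, Xc X c t = X 0 := by
    filter_upwards [self_mem_nhdsWithin] with t ht
    refine Xc_init ?_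
    rw [← h]
    exact (ENNReal.ofReal_lt_ofReal_iff hs).2 ht
  have hll : Function.leftLim (Xc X c) s = X 0 :=
    leftLim_eq_of_eventually hev tendsto_const_nhds
  have e0 : TuZero X c = Tu X c 0 := rfl
  have hhit : X s ≥ X 0 + c := by
    have hh := tuZero_hit hX hc (e0 ▸ hTne) (by rw [e0, htr]; exact hs)
    rwa [e0, htr] at hh
  have hXsm : Function.leftLim X s ≤ X 0 + c := by
    refine le_of_tendsto (leftLim_X hX s) ?_
    filter_upwards [Ioo_mem_nhdsLT hs] with t ht
    have h1 : X t ≤ supOn X 0 t := le_supOn hX ⟨ht.1.le, le_rfl⟩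
    have h2 : supOn X 0 t - X 0 ≤ c := tuZero_pre X c ht.1.le (by
      rw [e0, ← h]; exact (ENNReal.ofReal_lt_ofReal_iff hs).2 ht.2)
    linarith
  rw [jumpAt, jumpAt, hXcs, hll]
  rw [abs_of_nonneg (by linarith), abs_of_nonneg (by linarith)]
  linarith

private lemma case_up_succ {X : ℝ → ℝ} (hX : Cadlag X) {c : ℝ} (hc : 0 < c) {k : ℕ} {s : ℝ}
    (hs : 0 < s) (h : ENNReal.ofReal s = Tu X c (k + 1)) :
    |jumpAt (Xc X c) s| ≤ |jumpAt X s| := by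
  have hTne : Tu X c (k + 1) ≠ ⊤ := h ▸ ENNReal.ofReal_ne_top
  have hTdne : Td X c k ≠ ⊤ := ne_top_of_le_ne_top hTne (Td_le_Tu_succ X c k)
  have hstrict : Td X c k < Tu X c (k + 1) := by rw [Tu_succ_eq]; exact nextTu_lt hX hc hTdne
  set d := (Td X c k).toReal with hddef
  have hds : d < s := by
    have hh := (ENNReal.toReal_lt_toReal hTdne hTne).2 hstrict
    rwa [← h, ENNReal.toReal_ofReal hs.le] at hh
  have hd0 : (0:ℝ) ≤ d := ENNReal.toReal_nonneg
  have htr : (Tu X c (k + 1)).toReal = s := by rw [← h, ENNReal.toReal_ofReal hs.le]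
  have hTdd : Tu X c (k + 1) < Td X c (k + 1) := by rw [Td_eq]; exact nextTd_lt hX hc hTne
  have hXcs : Xc X c s = X s - c := by
    rw [Xc_up (k := k + 1) h.ge (h ▸ hTdd), htr]
    congr 1
    rw [supOn, Icc_self, image_singleton, csSup_singleton]
  have hofd : ENNReal.ofReal d = Td X c k := ENNReal.ofReal_toReal hTdne
  have hev : ∀ᶠ t in 𝓝[<] s, Xc X c t = infOn X d t + c := by
    filter_upwards [Ioo_mem_nhdsLT hds] with t ht
    rw [Xc_down (by rw [← hofd]; exact ENNReal.ofReal_le_ofReal ht.1.le)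
      (by rw [← h]; exact (ENNReal.ofReal_lt_ofReal_iff hs).2 ht.2), ← hddef]
  set I := sInf (X '' Ico d s) with hIdef
  have hll : Function.leftLim (Xc X c) s = I + c :=
    leftLim_eq_of_eventually hev ((tendsto_infOn_left hX hds).add tendsto_const_nhds)
  have hhit : X s - I ≥ 2 * c := by
    have hh := nextTu_hit hX hc hTdne (show nextTu X c (Td X c k) ≠ ⊤ by
      rw [← Tu_succ_eq]; exact hTne)
    rw [← Tu_succ_eq, htr, ← hddef, ← hIdef] at hh
    exact hh
  have hlim : Function.leftLim X s - I ≤ 2 * c := by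
    have htend : Tendsto (fun t => X t - infOn X d t) (𝓝[<] s)
        (𝓝 (Function.leftLim X s - I)) := (leftLim_X hX s).sub (tendsto_infOn_left hX hds)
    refine le_of_tendsto htend ?_
    filter_upwards [Ioo_mem_nhdsLT hds] with t ht
    have h3 := nextTu_pre X c (le_trans hd0 ht.1.le)
      (by rw [← hofd]; exact ENNReal.ofReal_le_ofReal ht.1.le)
      (show ENNReal.ofReal t < nextTu X c (Td X c k) from by
        rw [← Tu_succ_eq, ← h]; exact (ENNReal.ofReal_lt_ofReal_iff hs).2 ht.2)
    rw [← hddef] at h3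
    exact h3
  rw [jumpAt, jumpAt, hXcs, hll]
  rw [abs_of_nonneg (by linarith), abs_of_nonneg (by linarith)]
  linarith

private lemma case_down_bd {X : ℝ → ℝ} (hX : Cadlag X) {c : ℝ} (hc : 0 < c) {k : ℕ} {s : ℝ}
    (hs : 0 < s) (h : ENNReal.ofReal s = Td X c k) :
    |jumpAt (Xc X c) s| ≤ |jumpAt X s| := by
  have hTdne : Td X c k ≠ ⊤ := h ▸ ENNReal.ofReal_ne_top
  have hTune : Tu X c k ≠ ⊤ := ne_top_of_le_ne_top hTdne (Tu_le_Td X c k)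
  have hstrict : Tu X c k < Td X c k := by rw [Td_eq]; exact nextTd_lt hX hc hTune
  set a := (Tu X c k).toReal with haddef
  have has : a < s := by
    have hh := (ENNReal.toReal_lt_toReal hTune hTdne).2 hstrict
    rwa [← h, ENNReal.toReal_ofReal hs.le] at hh
  have ha0 : (0:ℝ) ≤ a := ENNReal.toReal_nonneg
  have htr : (Td X c k).toReal = s := by rw [← h, ENNReal.toReal_ofReal hs.le]
  have hTusucc : Td X c k < Tu X c (k + 1) := by rw [Tu_succ_eq]; exact nextTu_lt hX hc hTdne
  have hXcs : Xc X c s = X s + c := by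
    rw [Xc_down h.ge (h ▸ hTusucc), htr]
    congr 1
    rw [infOn, Icc_self, image_singleton, csInf_singleton]
  have hofa : ENNReal.ofReal a = Tu X c k := ENNReal.ofReal_toReal hTune
  have hev : ∀ᶠ t in 𝓝[<] s, Xc X c t = supOn X a t - c := by
    filter_upwards [Ioo_mem_nhdsLT has] with t ht
    rw [Xc_up (by rw [← hofa]; exact ENNReal.ofReal_le_ofReal ht.1.le)
      (by rw [← h]; exact (ENNReal.ofReal_lt_ofReal_iff hs).2 ht.2), ← haddef]
  set S := sSup (X '' Ico a s) with hSdef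
  have hll : Function.leftLim (Xc X c) s = S - c :=
    leftLim_eq_of_eventually hev ((tendsto_supOn_left hX has).sub tendsto_const_nhds)
  have hhit : S - X s ≥ 2 * c := by
    have h2 := nextTd_hit hX hc hTune (show nextTd X c (Tu X c k) ≠ ⊤ by
      rw [← Td_eq]; exact hTdne)
    rw [← Td_eq, htr, ← haddef, ← hSdef] at h2
    exact h2
  have hlim : S - Function.leftLim X s ≤ 2 * c := by
    have htend : Tendsto (fun t => supOn X a t - X t) (𝓝[<] s)
        (𝓝 (S - Function.leftLim X s)) := (tendsto_supOn_left hX has).sub (leftLim_X hX s)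
    refine le_of_tendsto htend ?_
    filter_upwards [Ioo_mem_nhdsLT has] with t ht
    have h3 := nextTd_pre X c (le_trans ha0 ht.1.le)
      (by rw [← hofa]; exact ENNReal.ofReal_le_ofReal ht.1.le)
      (show ENNReal.ofReal t < nextTd X c (Tu X c k) from by
        rw [← Td_eq, ← h]; exact (ENNReal.ofReal_lt_ofReal_iff hs).2 ht.2)
    rw [← haddef] at h3
    exact h3
  rw [jumpAt, jumpAt, hXcs, hll]
  rw [abs_of_nonpos (by linarith), abs_of_nonpos (by linarith)]
  linarith

private lemma case_up_int {X : ℝ → ℝ} (hX : Cadlag X) {c : ℝ} {k : ℕ} {s : ℝ} (hs : 0 < s)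
    (h1 : Tu X c k < ENNReal.ofReal s) (h2 : ENNReal.ofReal s < Td X c k) :
    |jumpAt (Xc X c) s| ≤ |jumpAt X s| := by
  have hTune : Tu X c k ≠ ⊤ := ne_top_of_lt h1
  set a := (Tu X c k).toReal with haddef
  have has : a < s := by
    have hh := (ENNReal.toReal_lt_toReal hTune ENNReal.ofReal_ne_top).2 h1
    rwa [ENNReal.toReal_ofReal hs.le] at hh
  have hofa : ENNReal.ofReal a = Tu X c k := ENNReal.ofReal_toReal hTune
  have hXcs : Xc X c s = supOn X a s - c := by
    rw [Xc_up h1.le h2, ← haddef]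
  have hev : ∀ᶠ t in 𝓝[<] s, Xc X c t = supOn X a t - c := by
    filter_upwards [Ioo_mem_nhdsLT has] with t ht
    rw [Xc_up (k := k) (by rw [← hofa]; exact ENNReal.ofReal_le_ofReal ht.1.le)
      (lt_trans ((ENNReal.ofReal_lt_ofReal_iff hs).2 ht.2) h2), ← haddef]
  set S := sSup (X '' Ico a s) with hSdef
  have hll : Function.leftLim (Xc X c) s = S - c :=
    leftLim_eq_of_eventually hev ((tendsto_supOn_left hX has).sub tendsto_const_nhds)
  have hXm : Function.leftLim X s ≤ S := by
    refine le_of_tendsto (leftLim_X hX s) ?_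
    filter_upwards [Ioo_mem_nhdsLT has] with t ht
    exact le_sSup_Ico hX ⟨ht.1.le, ht.2⟩
  have hsplit : supOn X a s = max S (X s) := supOn_split hX has
  rw [jumpAt, jumpAt, hXcs, hll, hsplit]
  rcases le_total (X s) S with hcase | hcase
  · rw [max_eq_left hcase]
    have hz : S - c - (S - c) = 0 := by ring
    rw [hz, abs_zero]
    exact abs_nonneg _
  · rw [max_eq_right hcase]
    rw [abs_of_nonneg (by linarith), abs_of_nonneg (by linarith)]
    linarith

private lemma case_down_int {X : ℝ → ℝ} (hX : Cadlag X) {c : ℝ} {k : ℕ} {s : ℝ} (hs : 0 < s)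
    (h1 : Td X c k < ENNReal.ofReal s) (h2 : ENNReal.ofReal s < Tu X c (k + 1)) :
    |jumpAt (Xc X c) s| ≤ |jumpAt X s| := by
  have hTdne : Td X c k ≠ ⊤ := ne_top_of_lt h1
  set d := (Td X c k).toReal with hddef
  have hds : d < s := by
    have hh := (ENNReal.toReal_lt_toReal hTdne ENNReal.ofReal_ne_top).2 h1
    rwa [ENNReal.toReal_ofReal hs.le] at hh
  have hofd : ENNReal.ofReal d = Td X c k := ENNReal.ofReal_toReal hTdne
  have hXcs : Xc X c s = infOn X d s + c := by
    rw [Xc_down h1.le h2, ← hddef]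
  have hev : ∀ᶠ t in 𝓝[<] s, Xc X c t = infOn X d t + c := by
    filter_upwards [Ioo_mem_nhdsLT hds] with t ht
    rw [Xc_down (by rw [← hofd]; exact ENNReal.ofReal_le_ofReal ht.1.le)
      (lt_trans ((ENNReal.ofReal_lt_ofReal_iff hs).2 ht.2) h2), ← hddef]
  set I := sInf (X '' Ico d s) with hIdef
  have hll : Function.leftLim (Xc X c) s = I + c :=
    leftLim_eq_of_eventually hev ((tendsto_infOn_left hX hds).add tendsto_const_nhds)
  have hXm : I ≤ Function.leftLim X s := by
    refine ge_of_tendsto (leftLim_X hX s) ?_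
    filter_upwards [Ioo_mem_nhdsLT hds] with t ht
    exact sInf_Ico_le hX ⟨ht.1.le, ht.2⟩
  have hsplit : infOn X d s = min I (X s) := infOn_split hX hds
  rw [jumpAt, jumpAt, hXcs, hll, hsplit]
  rcases le_total I (X s) with hcase | hcase
  · rw [min_eq_left hcase]
    have hz : I + c - (I + c) = 0 := by ring
    rw [hz, abs_zero]
    exact abs_nonneg _
  · rw [min_eq_right hcase]
    rw [abs_of_nonpos (by linarith), abs_of_nonpos (by linarith)]
    linarith

end Cases

/-- the jumps of `X^c` are dominated by the jumps of `X`: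
`|ΔX^c(s)| ≤ |ΔX(s)|` for every `s > 0`. -/
theorem stmt_3 (X : ℝ → ℝ) (hX : Cadlag X) (c : ℝ) (hc : 0 < c)
    (hud : Tu X c 0 ≤ TdIni X c) :
    ∀ s : ℝ, 0 < s → |jumpAt (Xc X c) s| ≤ |jumpAt X s| := by
  intro s hs
  have hex : ∃ k, ENNReal.ofReal s < Td X c k := exists_Td_gt hX hc s
  obtain ⟨k0, hk0lt, hk0min⟩ :
      ∃ k, ENNReal.ofReal s < Td X c k ∧ ∀ j < k, Td X c j ≤ ENNReal.ofReal s :=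
    ⟨Nat.find hex, Nat.find_spec hex, fun j hj => not_lt.1 (Nat.find_min hex hj)⟩
  cases k0 with
  | zero =>
    rcases lt_trichotomy (ENNReal.ofReal s) (Tu X c 0) with hlt | heq | hgt
    · exact case_init hs hlt
    · exact case_up0 hX hc hs heq
    · exact case_up_int hX hs hgt hk0lt
  | succ k =>
    have hprev : Td X c k ≤ ENNReal.ofReal s := hk0min k (Nat.lt_succ_self k)
    rcases lt_or_ge (ENNReal.ofReal s) (Tu X c (k + 1)) with hlt | hge
    · rcases eq_or_lt_of_le hprev with heq | hgt
      · exact case_down_bd hX hc hs heq.symm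
      · exact case_down_int hX hs hgt hlt
    · rcases eq_or_lt_of_le hge with heq | hgt
      · exact case_up_succ hX hc hs heq.symm
      · exact case_up_int hX hs hgt hk0lt

end
end

section
/- Let B^c be the finite-variation approximation of a Brownian motion B with |B − B^c| ≤ c, and suppose dB^c ≥ 0 on {B^c = B − c} and dB^c ≤ 0 on {B^c = B + c}. Then B^{c/2} − B^c ≥ c/2 on the support of the positive part of dB^c and B^{c/2} − B^c ≤ −c/2 on the support of the negative part, and consequently ∫_0^1 (B^{c/2} − B^c) dB^c ≥ (c/2) TV(B^c, 1). -/
open Set Filter MeasureTheory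
open scoped ENNReal NNReal Topology

noncomputable section

/-- A right-continuous real function is Borel measurable. -/
lemma measurable_of_rightContinuous {f : ℝ → ℝ}
    (hf : ∀ t : ℝ, Tendsto f (nhdsWithin t (Ici t)) (nhds (f t))) :
    Measurable f := by
  have hmeas : ∀ n : ℕ, Measurable (fun t : ℝ => f ((⌈t * 2 ^ n⌉ : ℤ) / 2 ^ n)) := by
    intro n
    exact (measurable_from_top (f := fun k : ℤ => f ((k : ℝ) / 2 ^ n))).comp
      (Int.measurable_ceil.comp (measurable_id.mul_const _))
  refine measurable_of_tendsto_metrizable hmeas (tendsto_pi_nhds.2 fun t => ?_)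
  have h1 : ∀ n : ℕ, t ≤ (⌈t * 2 ^ n⌉ : ℝ) / 2 ^ n := by
    intro n
    rw [le_div_iff₀ (by positivity)]
    exact_mod_cast Int.le_ceil (t * 2 ^ n)
  have h2 : ∀ n : ℕ, (⌈t * 2 ^ n⌉ : ℝ) / 2 ^ n ≤ t + (1 / 2) ^ n := by
    intro n
    rw [div_le_iff₀ (by positivity)]
    have hle : ((⌈t * 2 ^ n⌉ : ℤ) : ℝ) ≤ t * 2 ^ n + 1 := (Int.ceil_lt_add_one _).le
    have h12 : ((1 : ℝ) / 2) ^ n * 2 ^ n = 1 := by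
      rw [one_div, inv_pow, inv_mul_cancel₀ (by positivity)]
    nlinarith
  have htend : Tendsto (fun n : ℕ => (⌈t * 2 ^ n⌉ : ℝ) / 2 ^ n) atTop
      (nhdsWithin t (Ici t)) := by
    apply tendsto_nhdsWithin_of_tendsto_nhds_of_eventually_within
    · have hub : Tendsto (fun n : ℕ => t + (1 / 2 : ℝ) ^ n) atTop (nhds t) := by
        have h0 : Tendsto (fun n : ℕ => ((1 : ℝ) / 2) ^ n) atTop (nhds 0) :=
          tendsto_pow_atTop_nhds_zero_of_lt_one (by norm_num) (by norm_num)
        simpa using tendsto_const_nhds.add h0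
      exact tendsto_of_tendsto_of_tendsto_of_le_of_le tendsto_const_nhds hub h1 h2
    · exact Eventually.of_forall h1
  exact (hf t).comp htend

/-- on the support of the positive (resp. negative) part of `dB^c`
one has `B^{c/2} − B^c ≥ c/2` (resp. `≤ −c/2`), and consequently
`∫_0^1 (B^{c/2} − B^c) dB^c ≥ (c/2) · TV(B^c, 1)`. -/
theorem stmt_18 (B : ℝ → ℝ) (hB : Continuous B) (c : ℝ) (hc : 0 < c)
    (Bc Bc2 : ℝ → ℝ) (hBc : Cadlag Bc) (hBc2 : Cadlag Bc2)
    (happrox : ∀ t, |B t - Bc t| ≤ c) (happrox2 : ∀ t, |B t - Bc2 t| ≤ c / 2)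
    (μ ν : Measure ℝ) [IsFiniteMeasure μ] [IsFiniteMeasure ν]
    (hsing : μ.MutuallySingular ν)
    (hrepr : ∀ t ∈ Icc (0 : ℝ) 1,
      Bc t = Bc 0 + (μ (Ioc 0 t)).toReal - (ν (Ioc 0 t)).toReal)
    (hμcarr : μ {t | t ∈ Ioc (0 : ℝ) 1 ∧ Bc t ≠ B t - c} = 0)
    (hνcarr : ν {t | t ∈ Ioc (0 : ℝ) 1 ∧ Bc t ≠ B t + c} = 0)
    (hTV : μ (Ioc (0 : ℝ) 1) + ν (Ioc (0 : ℝ) 1) =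
      eVariationOn Bc (Icc 0 1)) :
    (∀ t, Bc t = B t - c → Bc2 t - Bc t ≥ c / 2) ∧
    (∀ t, Bc t = B t + c → Bc2 t - Bc t ≤ -(c / 2)) ∧
    (∫ t in Ioc (0 : ℝ) 1, (Bc2 t - Bc t) ∂μ) -
        (∫ t in Ioc (0 : ℝ) 1, (Bc2 t - Bc t) ∂ν) ≥
      (c / 2) * (eVariationOn Bc (Icc 0 1)).toReal := by
  have key1 : ∀ t, Bc t = B t - c → Bc2 t - Bc t ≥ c / 2 := by
    intro t ht
    have h2 := abs_le.1 (happrox2 t)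
    rw [ht]; linarith [h2.1, h2.2]
  have key2 : ∀ t, Bc t = B t + c → Bc2 t - Bc t ≤ -(c / 2) := by
    intro t ht
    have h2 := abs_le.1 (happrox2 t)
    rw [ht]; linarith [h2.1, h2.2]
  refine ⟨key1, key2, ?_⟩
  have mf : Measurable (fun t => Bc2 t - Bc t) :=
    (measurable_of_rightContinuous hBc2.1).sub (measurable_of_rightContinuous hBc.1)
  have hbound : ∀ t, |Bc2 t - Bc t| ≤ 3 / 2 * c := by
    intro t
    have a1 := abs_le.1 (happrox t)
    have a2 := abs_le.1 (happrox2 t)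
    rw [abs_le]; constructor <;> linarith [a1.1, a1.2, a2.1, a2.2]
  have hintμ : IntegrableOn (fun t => Bc2 t - Bc t) (Ioc (0 : ℝ) 1) μ :=
    Integrable.mono' (integrable_const (3 / 2 * c)) mf.aestronglyMeasurable
      (Eventually.of_forall hbound)
  have hintν : IntegrableOn (fun t => Bc2 t - Bc t) (Ioc (0 : ℝ) 1) ν :=
    Integrable.mono' (integrable_const (3 / 2 * c)) mf.aestronglyMeasurable
      (Eventually.of_forall hbound)
  have hμae : ∀ᵐ t ∂(μ.restrict (Ioc (0 : ℝ) 1)), Bc t = B t - c := by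
    rw [ae_iff, Measure.restrict_apply' measurableSet_Ioc]
    refine measure_mono_null (fun t ht => ?_) hμcarr
    exact ⟨ht.2, ht.1⟩
  have hνae : ∀ᵐ t ∂(ν.restrict (Ioc (0 : ℝ) 1)), Bc t = B t + c := by
    rw [ae_iff, Measure.restrict_apply' measurableSet_Ioc]
    refine measure_mono_null (fun t ht => ?_) hνcarr
    exact ⟨ht.2, ht.1⟩
  have hμint : c / 2 * (μ (Ioc (0 : ℝ) 1)).toReal ≤
      ∫ t in Ioc (0 : ℝ) 1, (Bc2 t - Bc t) ∂μ := by
    have := integral_mono_ae (integrable_const (c / 2)) hintμ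
      (hμae.mono fun t h => key1 t h)
    simpa [integral_const, Measure.restrict_apply_univ, smul_eq_mul, mul_comm, Measure.real] using this
  have hνint : (∫ t in Ioc (0 : ℝ) 1, (Bc2 t - Bc t) ∂ν) ≤
      -(c / 2) * (ν (Ioc (0 : ℝ) 1)).toReal := by
    have := integral_mono_ae hintν (integrable_const (-(c / 2)))
      (hνae.mono fun t h => key2 t h)
    simpa [integral_const, Measure.restrict_apply_univ, smul_eq_mul, mul_comm, Measure.real] using this
  have hvar : (eVariationOn Bc (Icc (0 : ℝ) 1)).toReal =
      (μ (Ioc (0 : ℝ) 1)).toReal + (ν (Ioc (0 : ℝ) 1)).toReal := by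
    rw [← hTV, ENNReal.toReal_add (measure_ne_top μ _) (measure_ne_top ν _)]
  rw [ge_iff_le, hvar, mul_add]
  linarith [hμint, hνint]

end
end
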